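/- Let G₁ and G₂ be graphs in the class 𝒢, both with the same (prime) number n of vertices, the same number m of edges, and the same number s of loops. Then the disjoint union G₁ ⊔ G₂ is composite with respect to the direct product if and only if G₁ ≅ G₂. -/

import Mathlib

open Kronecker

/-- Graph isomorphism between adjacency relations. -/
def IsIso {V₁ : Type*} {V₂ : Type*} (A₁ : V₁ → V₁ → Prop) (A₂ : V₂ → V₂ → Prop) : Prop :=
  ∃ e : V₁ ≃ V₂, ∀ u v, A₁ u v ↔ A₂ (e u) (e v)

/-- Connectedness: the reflexive-transitive closure relates every pair of vertices. -/
def Conn {V : Type*} (A : V → V → Prop) : Prop :=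
  ∀ u v : V, Relation.ReflTransGen A u v

/-- Bipartiteness via a 2-coloring. -/
def Bipartite {V : Type*} (A : V → V → Prop) : Prop :=
  ∃ c : V → Bool, ∀ u v, A u v → c u ≠ c v

/-- Direct (Kronecker/tensor/cardinal) product of graphs. -/
def DProd {V₁ : Type*} {V₂ : Type*} (A₁ : V₁ → V₁ → Prop) (A₂ : V₂ → V₂ → Prop) :
    V₁ × V₂ → V₁ × V₂ → Prop :=
  fun p q => A₁ p.1 q.1 ∧ A₂ p.2 q.2

/-- Disjoint union of graphs. -/
def DUnion {V₁ : Type*} {V₂ : Type*} (A₁ : V₁ → V₁ → Prop) (A₂ : V₂ → V₂ → Prop) :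
    V₁ ⊕ V₂ → V₁ ⊕ V₂ → Prop
  | Sum.inl u, Sum.inl v => A₁ u v
  | Sum.inr u, Sum.inr v => A₂ u v
  | _, _ => False

/-- A graph is composite w.r.t. the direct product if it is isomorphic to a direct
product of graphs each having at least two vertices. -/
def Composite {V : Type*} (A : V → V → Prop) : Prop :=
  ∃ (V₁ V₂ : Type) (A₁ : V₁ → V₁ → Prop) (A₂ : V₂ → V₂ → Prop),
    Symmetric A₁ ∧ Symmetric A₂ ∧
    2 ≤ Nat.card V₁ ∧ 2 ≤ Nat.card V₂ ∧
    IsIso A (DProd A₁ A₂)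

/-- Number of edges (unordered pairs, loops included). -/
noncomputable def numEdges {V : Type*} {A : V → V → Prop} (h : Symmetric A) : ℕ :=
  (Sym2.fromRel (⟨fun _ _ hab => h hab⟩ : Std.Symm A)).ncard

/-- Number of loops. -/
noncomputable def numLoops {V : Type*} (A : V → V → Prop) : ℕ :=
  {u : V | A u u}.ncard

/-- The class 𝒢 of the paper. -/
def InClassG {n : ℕ} {A : Fin n → Fin n → Prop} (h : Symmetric A) : Prop :=
  Conn A ∧ ¬ Bipartite A ∧ n.Prime ∧
  numLoops A < numEdges h ∧
  ¬ 2 ∣ (2 * numEdges h - numLoops A) ∧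
  ¬ 3 ∣ (2 * numEdges h - numLoops A)
noncomputable def arcsCnt {V : Type*} (A : V → V → Prop) : ℕ := {p : V × V | A p.1 p.2}.ncard


lemma arcsCnt_iso {V₁ V₂ : Type*} {A : V₁ → V₁ → Prop} {B : V₂ → V₂ → Prop}
    (e : V₁ ≃ V₂) (he : ∀ u v, A u v ↔ B (e u) (e v)) : arcsCnt A = arcsCnt B := by
  have himg : {p : V₂ × V₂ | B p.1 p.2} = (Prod.map e e) '' {p : V₁ × V₁ | A p.1 p.2} := by
    ext ⟨a, b⟩
    simp only [Set.mem_setOf_eq, Set.mem_image, Prod.map, Prod.exists, Prod.mk.injEq]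
    constructor
    · intro hab
      exact ⟨e.symm a, e.symm b, by simpa [he] using hab, by simp, by simp⟩
    · rintro ⟨u, v, huv, rfl, rfl⟩
      exact (he u v).mp huv
  rw [arcsCnt, arcsCnt, himg,
    Set.ncard_image_of_injective _ (e.injective.prodMap e.injective)]

lemma arcsCnt_dprod {V₁ V₂ : Type*} (A : V₁ → V₁ → Prop) (B : V₂ → V₂ → Prop) :
    arcsCnt (DProd A B) = arcsCnt A * arcsCnt B := by
  rw [arcsCnt, arcsCnt, arcsCnt, ← Nat.card_coe_set_eq, ← Nat.card_coe_set_eq,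
    ← Nat.card_coe_set_eq, ← Nat.card_prod]
  exact Nat.card_congr
    { toFun := fun x => (⟨(x.1.1.1, x.1.2.1), x.2.1⟩, ⟨(x.1.1.2, x.1.2.2), x.2.2⟩)
      invFun := fun y => ⟨((y.1.1.1, y.2.1.1), (y.1.1.2, y.2.1.2)), y.1.2, y.2.2⟩
      left_inv := by rintro ⟨⟨⟨a, b⟩, ⟨c, d⟩⟩, h⟩; rfl
      right_inv := by rintro ⟨⟨⟨a, b⟩, h⟩, ⟨⟨c, d⟩, h'⟩⟩; rfl }

lemma arcsCnt_dunion {V₁ V₂ : Type*} [Finite V₁] [Finite V₂]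
    (A : V₁ → V₁ → Prop) (B : V₂ → V₂ → Prop) :
    arcsCnt (DUnion A B) = arcsCnt A + arcsCnt B := by
  have himg : {p : (V₁ ⊕ V₂) × (V₁ ⊕ V₂) | DUnion A B p.1 p.2} =
      (fun q : V₁ × V₁ => (Sum.inl q.1, Sum.inl q.2)) '' {p | A p.1 p.2} ∪
      (fun q : V₂ × V₂ => (Sum.inr q.1, Sum.inr q.2)) '' {p | B p.1 p.2} := by
    ext ⟨u, v⟩
    rcases u with u | u <;> rcases v with v | v <;>
      simp [DUnion, Set.mem_image, Prod.ext_iff]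
  have hinl : Function.Injective (fun q : V₁ × V₁ => ((Sum.inl q.1 : V₁ ⊕ V₂), (Sum.inl q.2 : V₁ ⊕ V₂))) := by
    rintro ⟨a, b⟩ ⟨c, d⟩ h
    simp only [Prod.mk.injEq, Sum.inl.injEq] at h
    exact Prod.ext h.1 h.2
  have hinr : Function.Injective (fun q : V₂ × V₂ => ((Sum.inr q.1 : V₁ ⊕ V₂), (Sum.inr q.2 : V₁ ⊕ V₂))) := by
    rintro ⟨a, b⟩ ⟨c, d⟩ h
    simp only [Prod.mk.injEq, Sum.inr.injEq] at h
    exact Prod.ext h.1 h.2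
  have hdisj : Disjoint
      ((fun q : V₁ × V₁ => ((Sum.inl q.1 : V₁ ⊕ V₂), (Sum.inl q.2 : V₁ ⊕ V₂))) '' {p | A p.1 p.2})
      ((fun q : V₂ × V₂ => ((Sum.inr q.1 : V₁ ⊕ V₂), (Sum.inr q.2 : V₁ ⊕ V₂))) '' {p | B p.1 p.2}) := by
    rw [Set.disjoint_left]
    rintro ⟨u, v⟩ ⟨⟨a, b⟩, _, h1⟩ ⟨⟨c, d⟩, _, h2⟩
    rw [← h2] at h1
    simp at h1
  rw [arcsCnt, himg, Set.ncard_union_eq hdisj (Set.toFinite _) (Set.toFinite _),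
    Set.ncard_image_of_injective _ hinl, Set.ncard_image_of_injective _ hinr]
  rfl

lemma arcsCnt_count {N : ℕ} {A : Fin N → Fin N → Prop} (h : Symmetric A) :
    arcsCnt A + numLoops A = 2 * numEdges h := by
  classical
  set L : Set (Fin N × Fin N) := {p | p.1 = p.2 ∧ A p.1 p.2} with hL
  set Slt : Set (Fin N × Fin N) := {p | p.1 < p.2 ∧ A p.1 p.2} with hSlt
  set Sgt : Set (Fin N × Fin N) := {p | p.2 < p.1 ∧ A p.1 p.2} with hSgt
  have hsplit : {p : Fin N × Fin N | A p.1 p.2} = (L ∪ Slt) ∪ Sgt := by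
    ext ⟨a, b⟩
    simp only [Set.mem_setOf_eq, Set.mem_union, hL, hSlt, hSgt]
    constructor
    · intro hab
      rcases lt_trichotomy a b with hc | hc | hc
      · exact Or.inl (Or.inr ⟨hc, hab⟩)
      · exact Or.inl (Or.inl ⟨hc, hab⟩)
      · exact Or.inr ⟨hc, hab⟩
    · rintro ((⟨_, h'⟩ | ⟨_, h'⟩) | ⟨_, h'⟩) <;> exact h'
  have hdisj0 : Disjoint L Slt := by
    rw [Set.disjoint_left]
    rintro ⟨a, b⟩ ⟨h1, -⟩ ⟨h2, -⟩
    simp only at h1 h2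
    omega
  have hdisj1 : Disjoint (L ∪ Slt) Sgt := by
    rw [Set.disjoint_left]
    rintro ⟨a, b⟩ (⟨h1, -⟩ | ⟨h1, -⟩) ⟨h2, -⟩ <;> simp only at h1 h2 <;>
      first
      | (rw [Fin.ext_iff] at h1; omega)
      | (rw [Fin.lt_def] at h1 h2; omega)
  have hgt : Sgt.ncard = Slt.ncard := by
    have himg : Sgt = Prod.swap '' Slt := by
      ext ⟨a, b⟩
      constructor
      · rintro ⟨h1, h2⟩
        exact ⟨(b, a), ⟨h1, h h2⟩, rfl⟩
      · rintro ⟨⟨c, d⟩, ⟨h1, h2⟩, heq⟩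
        rw [Prod.ext_iff] at heq
        obtain ⟨rfl, rfl⟩ := heq
        exact ⟨h1, h h2⟩
    rw [himg, Set.ncard_image_of_injective _ Prod.swap_injective]
  have hloops : L.ncard = numLoops A := by
    have himg : L = (fun u => (u, u)) '' {u | A u u} := by
      ext ⟨a, b⟩
      constructor
      · rintro ⟨h1, h2⟩
        simp only at h1
        subst h1
        exact ⟨a, h2, rfl⟩
      · rintro ⟨u, hu, heq⟩
        rw [Prod.ext_iff] at heq
        obtain ⟨rfl, rfl⟩ := heq
        exact ⟨rfl, hu⟩
    rw [himg, Set.ncard_image_of_injective _ (fun a b hab => (Prod.ext_iff.mp hab).1), numLoops]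
  have hedges : numEdges h = L.ncard + Slt.ncard := by
    have himg : Sym2.fromRel (⟨fun _ _ hab => h hab⟩ : Std.Symm A) = (fun p : Fin N × Fin N => s(p.1, p.2)) '' (L ∪ Slt) := by
      ext s
      induction s with
      | _ a b =>
        simp only [Sym2.fromRel_prop, Set.mem_image, Set.mem_union, Prod.exists]
        constructor
        · intro hab
          rcases lt_trichotomy a b with hc | hc | hc
          · exact ⟨a, b, Or.inr ⟨hc, hab⟩, rfl⟩
          · exact ⟨a, b, Or.inl ⟨hc, hab⟩, rfl⟩
          · exact ⟨b, a, Or.inr ⟨hc, h hab⟩, Sym2.eq_swap⟩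
        · rintro ⟨c, d, hcd, heq⟩
          have hA : A c d := by rcases hcd with ⟨-, h'⟩ | ⟨-, h'⟩ <;> exact h'
          have heq' : c = a ∧ d = b ∨ c = b ∧ d = a := Sym2.eq_iff.mp heq
          rcases heq' with ⟨rfl, rfl⟩ | ⟨rfl, rfl⟩
          · exact hA
          · exact h hA
    have hinj : Set.InjOn (fun p : Fin N × Fin N => s(p.1, p.2)) (L ∪ Slt) := by
      rintro ⟨a, b⟩ hab ⟨c, d⟩ hcd heq
      have h1 : a ≤ b := by
        rcases hab with ⟨h', -⟩ | ⟨h', -⟩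
        · exact le_of_eq h'
        · exact le_of_lt h'
      have h2 : c ≤ d := by
        rcases hcd with ⟨h', -⟩ | ⟨h', -⟩
        · exact le_of_eq h'
        · exact le_of_lt h'
      rcases Sym2.eq_iff.mp (show s(a, b) = s(c, d) from heq) with ⟨rfl, rfl⟩ | ⟨rfl, rfl⟩
      · rfl
      · have : a = b := le_antisymm h1 h2
        subst this
        rfl
    rw [numEdges, himg, Set.ncard_image_of_injOn hinj,
      Set.ncard_union_eq hdisj0 (Set.toFinite _) (Set.toFinite _)]
  rw [arcsCnt, hsplit, Set.ncard_union_eq hdisj1 (Set.toFinite _) (Set.toFinite _),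
    Set.ncard_union_eq hdisj0 (Set.toFinite _) (Set.toFinite _), hgt, hedges, ← hloops]
  ring

lemma exists_nbr {n : ℕ} {A : Fin n → Fin n → Prop} (hconn : Conn A) (hn : 2 ≤ n) :
    ∀ a : Fin n, ∃ b, A a b := by
  intro a
  have h1 : 1 < Fintype.card (Fin n) := by rw [Fintype.card_fin]; omega
  obtain ⟨c, hc⟩ := Fintype.exists_ne_of_one_lt_card h1 a
  rcases (hconn a c).cases_head with rfl | ⟨b, hab, -⟩
  · exact absurd rfl hc
  · exact ⟨b, hab⟩

lemma core {n : ℕ} {V₂ : Type*} {A₁ A₂ : Fin n → Fin n → Prop} {B₁ : Bool → Bool → Prop}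
    {B₂ : V₂ → V₂ → Prop} [Finite V₂]
    (hs₁ : Symmetric A₁) (hs₂ : Symmetric A₂) (hB₁ : Symmetric B₁)
    (hn : 2 ≤ n)
    (hconn₁ : Conn A₁) (hconn₂ : Conn A₂)
    (hbip : ¬ Bipartite A₁)
    (h2 : ¬ 2 ∣ arcsCnt A₁) (h3 : ¬ 3 ∣ arcsCnt A₁) (haa : arcsCnt A₂ = arcsCnt A₁)
    (e : (Fin n ⊕ Fin n) ≃ Bool × V₂)
    (he : ∀ u v, DUnion A₁ A₂ u v ↔ DProd B₁ B₂ (e u) (e v)) :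
    IsIso A₁ A₂ := by
  classical
  have hNZ : NeZero n := ⟨by omega⟩
  -- cardinality of V₂
  have hcard : Nat.card V₂ = n := by
    have := Nat.card_congr e
    rw [Nat.card_sum, Nat.card_prod] at this
    simp only [Nat.card_eq_fintype_card, Fintype.card_fin, Fintype.card_bool] at this
    -- this : n + n = 2 * Nat.card V₂  (modulo simp forms)
    omega
  have hne : Nonempty V₂ := by
    by_contra hemp
    have : IsEmpty V₂ := not_nonempty_iff.mp hemp
    rw [Nat.card_of_isEmpty] at hcard
    omega
  -- neighbor existence in the union
  have nbrU : ∀ x : Fin n ⊕ Fin n, ∃ y, DUnion A₁ A₂ x y := by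
    rintro (u | u)
    · obtain ⟨b, hb⟩ := exists_nbr hconn₁ hn u
      exact ⟨Sum.inl b, hb⟩
    · obtain ⟨b, hb⟩ := exists_nbr hconn₂ hn u
      exact ⟨Sum.inr b, hb⟩
  -- arcs equation
  have harcs : arcsCnt B₁ * arcsCnt B₂ = 2 * arcsCnt A₁ := by
    have h1 := arcsCnt_iso e he
    rw [arcsCnt_dunion, arcsCnt_dprod, haa] at h1
    omega
  set p := B₁ false false with hp
  set q := B₁ false true with hq
  set r := B₁ true true with hr
  have hq' : B₁ true false ↔ q := ⟨fun h' => hB₁ h', fun h' => hB₁ h'⟩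
  by_cases hqc : q
  · -- cross edge present: all cases contradictory
    exfalso
    by_cases hpc : p <;> by_cases hrc : r
    · -- arcs B₁ = 4
      have h4 : arcsCnt B₁ = 4 := by
        have hst : {z : Bool × Bool | B₁ z.1 z.2} =
            ↑({(false, false), (false, true), (true, false), (true, true)} : Finset (Bool × Bool)) := by
          ext ⟨x, y⟩
          cases x <;> cases y <;> simp [hpc, hqc, hrc, hq'.mpr hqc, ← hp, ← hq, ← hr]
        rw [arcsCnt, hst, Set.ncard_coe_finset]
        rfl
      rw [h4] at harcs
      omega
    · -- arcs B₁ = 3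
      have h4 : arcsCnt B₁ = 3 := by
        have hst : {z : Bool × Bool | B₁ z.1 z.2} =
            ↑({(false, false), (false, true), (true, false)} : Finset (Bool × Bool)) := by
          ext ⟨x, y⟩
          cases x <;> cases y <;>
            simp [hpc, hqc, hrc, hq'.mpr hqc, ← hp, ← hq, ← hr]
        rw [arcsCnt, hst, Set.ncard_coe_finset]
        rfl
      rw [h4] at harcs
      omega
    · -- arcs B₁ = 3
      have h4 : arcsCnt B₁ = 3 := by
        have hst : {z : Bool × Bool | B₁ z.1 z.2} =
            ↑({(false, true), (true, false), (true, true)} : Finset (Bool × Bool)) := by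
          ext ⟨x, y⟩
          cases x <;> cases y <;>
            simp [hpc, hqc, hrc, hq'.mpr hqc, ← hp, ← hq, ← hr]
        rw [arcsCnt, hst, Set.ncard_coe_finset]
        rfl
      rw [h4] at harcs
      omega
    · -- bipartite
      apply hbip
      refine ⟨fun u => (e (Sum.inl u)).1, fun u v huv hcc => ?_⟩
      have hadj := (he (Sum.inl u) (Sum.inl v)).mp huv
      have hB := hadj.1
      simp only at hcc
      revert hB
      rw [hcc]
      cases (e (Sum.inl v)).1
      · simpa [← hp] using hpc
      · simpa [← hr] using hrc
  · by_cases hpc : p <;> by_cases hrc : r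
    · -- GOOD CASE: B₁ = Eq; loops at both, no cross
      have hBdiag : ∀ x y : Bool, B₁ x y → x = y := by
        intro x y hxy
        cases x <;> cases y
        · rfl
        · exact absurd hxy (by simpa [← hq] using hqc)
        · exact absurd (hq'.mp hxy) hqc
        · rfl
      have hBrefl : ∀ x : Bool, B₁ x x := by
        intro x
        cases x
        · exact hpc
        · exact hrc
      -- first coordinate constant on each side
      have key₁ : ∀ u v : Fin n, A₁ u v → (e (Sum.inl u)).1 = (e (Sum.inl v)).1 := by
        intro u v huv
        exact hBdiag _ _ ((he (Sum.inl u) (Sum.inl v)).mp huv).1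
      have key₂ : ∀ u v : Fin n, A₂ u v → (e (Sum.inr u)).1 = (e (Sum.inr v)).1 := by
        intro u v huv
        exact hBdiag _ _ ((he (Sum.inr u) (Sum.inr v)).mp huv).1
      set b := (e (Sum.inl (0 : Fin n))).1 with hb
      set c := (e (Sum.inr (0 : Fin n))).1 with hc
      have hσ : ∀ u : Fin n, (e (Sum.inl u)).1 = b := by
        intro u
        have hpath := hconn₁ 0 u
        induction hpath with
        | refl => rfl
        | tail _ hstep ih => rw [← key₁ _ _ hstep, ih]
      have hτ : ∀ u : Fin n, (e (Sum.inr u)).1 = c := by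
        intro u
        have hpath := hconn₂ 0 u
        induction hpath with
        | refl => rfl
        | tail _ hstep ih => rw [← key₂ _ _ hstep, ih]
      have hbc : b ≠ c := by
        intro hbceq
        have hall : ∀ x : Fin n ⊕ Fin n, (e x).1 = b := by
          rintro (u | u)
          · exact hσ u
          · rw [hτ u, hbceq]
        have hinj : Function.Injective (fun x : Fin n ⊕ Fin n => (e x).2) := by
          intro x y hxy
          apply e.injective
          exact Prod.ext (by rw [hall x, hall y]) hxy
        have hle := Nat.card_le_card_of_injective _ hinj
        rw [Nat.card_sum, hcard] at hle
        simp only [Nat.card_eq_fintype_card, Fintype.card_fin] at hle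
        omega
      -- build bijections
      have exg : ∀ x : V₂, ∃ u : Fin n, e (Sum.inl u) = (b, x) := by
        intro x
        rcases hsum : e.symm (b, x) with u | u
        · refine ⟨u, ?_⟩
          rw [← hsum, e.apply_symm_apply]
        · exfalso
          have h1 := hτ u
          rw [← hsum, e.apply_symm_apply] at h1
          have h2' : c = b := by simpa using h1.symm
          exact hbc h2'.symm
      have exh : ∀ x : V₂, ∃ u : Fin n, e (Sum.inr u) = (c, x) := by
        intro x
        rcases hsum : e.symm (c, x) with u | u
        · exfalso
          have h1 := hσ u
          rw [← hsum, e.apply_symm_apply] at h1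
          have h2' : c = b := by simpa using h1
          exact hbc h2'.symm
        · refine ⟨u, ?_⟩
          rw [← hsum, e.apply_symm_apply]
      set g : Fin n → V₂ := fun u => (e (Sum.inl u)).2 with hg
      set k : Fin n → V₂ := fun u => (e (Sum.inr u)).2 with hk
      have hgeq : ∀ u, e (Sum.inl u) = (b, g u) := fun u => Prod.ext (hσ u) rfl
      have hkeq : ∀ u, e (Sum.inr u) = (c, k u) := fun u => Prod.ext (hτ u) rfl
      have hgbij : Function.Bijective g := by
        constructor
        · intro u v huv
          have : e (Sum.inl u) = e (Sum.inl v) := by rw [hgeq, hgeq, huv]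
          exact Sum.inl.inj (e.injective this)
        · intro x
          obtain ⟨u, hu⟩ := exg x
          exact ⟨u, by rw [hg]; simp [hu]⟩
      have hkbij : Function.Bijective k := by
        constructor
        · intro u v huv
          have : e (Sum.inr u) = e (Sum.inr v) := by rw [hkeq, hkeq, huv]
          exact Sum.inr.inj (e.injective this)
        · intro x
          obtain ⟨u, hu⟩ := exh x
          exact ⟨u, by rw [hk]; simp [hu]⟩
      have hA₁iff : ∀ u v, A₁ u v ↔ B₂ (g u) (g v) := by
        intro u v
        have := he (Sum.inl u) (Sum.inl v)
        rw [hgeq u, hgeq v] at this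
        simp only [DProd] at this
        rw [show DUnion A₁ A₂ (Sum.inl u) (Sum.inl v) = A₁ u v from rfl] at this
        constructor
        · intro h'; exact ((this).mp h').2
        · intro h'; exact (this).mpr ⟨hBrefl b, h'⟩
      have hA₂iff : ∀ u v, A₂ u v ↔ B₂ (k u) (k v) := by
        intro u v
        have := he (Sum.inr u) (Sum.inr v)
        rw [hkeq u, hkeq v] at this
        simp only [DProd] at this
        rw [show DUnion A₁ A₂ (Sum.inr u) (Sum.inr v) = A₂ u v from rfl] at this
        constructor
        · intro h'; exact ((this).mp h').2
        · intro h'; exact (this).mpr ⟨hBrefl c, h'⟩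
      -- final iso
      set G := Equiv.ofBijective g hgbij with hG
      set K := Equiv.ofBijective k hkbij with hK
      refine ⟨G.trans K.symm, fun u v => ?_⟩
      rw [hA₁iff, hA₂iff]
      have hKG : ∀ w, k ((G.trans K.symm) w) = g w := by
        intro w
        exact K.apply_symm_apply (G w)
      rw [hKG u, hKG v]
    · -- single loop at false : vertices (true, *) isolated
      exfalso
      have hiso : ∀ z : Bool, ¬ B₁ z true := by
        intro z hz
        cases z
        · exact hqc (by rwa [← hq] at hz)
        · exact hrc (by rwa [← hr] at hz)
      obtain ⟨v₀⟩ := hne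
      obtain ⟨y, hxy⟩ := nbrU (e.symm (true, v₀))
      have hadj := (he _ _).mp hxy
      have h1 := hadj.1
      rw [e.apply_symm_apply] at h1
      exact hiso _ (hB₁ h1)
    · -- single loop at true : vertices (false,*) isolated
      exfalso
      have hiso : ∀ z : Bool, ¬ B₁ z false := by
        intro z hz
        cases z
        · exact hpc (by rwa [← hp] at hz)
        · exact hqc (hq'.mp hz)
      obtain ⟨v₀⟩ := hne
      obtain ⟨y, hxy⟩ := nbrU (e.symm (false, v₀))
      have hadj := (he _ _).mp hxy
      have h1 := hadj.1
      rw [e.apply_symm_apply] at h1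
      exact hiso _ (hB₁ h1)
    · -- no arcs in B₁ at all
      exfalso
      have hiso : ∀ z w : Bool, ¬ B₁ z w := by
        intro z w hz
        cases z <;> cases w
        · exact hpc (by rwa [← hp] at hz)
        · exact hqc (by rwa [← hq] at hz)
        · exact hqc (hq'.mp hz)
        · exact hrc (by rwa [← hr] at hz)
      obtain ⟨y, hxy⟩ := nbrU (Sum.inl 0)
      exact hiso _ _ ((he _ _).mp hxy).1

lemma fact2 {a b n : ℕ} (h : a * b = 2 * n) (ha : 2 ≤ a) (hb : 2 ≤ b) (hp : n.Prime) :
    (a = 2 ∧ b = n) ∨ (a = n ∧ b = 2) := by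
  have hn2 := hp.two_le
  have hdvd : n ∣ a * b := ⟨2, by omega⟩
  have key : ∀ x y : ℕ, x * y = 2 * n → 2 ≤ x → 2 ≤ y → n ∣ x → x = n ∧ y = 2 := by
    intro x y hxy hx hy hd
    have h1 : n ≤ x := Nat.le_of_dvd (by omega) hd
    have h2 : x ≤ n := by
      by_contra hlt
      have : (n + 1) * 2 ≤ x * y := Nat.mul_le_mul (by omega) hy
      omega
    have hxn : x = n := le_antisymm h2 h1
    subst hxn
    refine ⟨rfl, ?_⟩
    have : x * y = x * 2 := by omega
    exact Nat.eq_of_mul_eq_mul_left (by omega) this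
  rcases (hp.dvd_mul).mp hdvd with hd | hd
  · exact Or.inr (key a b h ha hb hd)
  · have := key b a (by rw [Nat.mul_comm]; exact h) hb ha hd
    exact Or.inl ⟨this.2, this.1⟩

/-- Transport a 2-element first factor to `Bool` and apply `core`. -/
lemma fromProd {n : ℕ} {W₁ W₂ : Type} {A₁ A₂ : Fin n → Fin n → Prop}
    {B₁ : W₁ → W₁ → Prop} {B₂ : W₂ → W₂ → Prop} [Finite W₁] [Finite W₂]
    (hs₁ : Symmetric A₁) (hs₂ : Symmetric A₂) (hB₁ : Symmetric B₁)
    (hn : 2 ≤ n)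
    (hconn₁ : Conn A₁) (hconn₂ : Conn A₂)
    (hbip : ¬ Bipartite A₁)
    (h2 : ¬ 2 ∣ arcsCnt A₁) (h3 : ¬ 3 ∣ arcsCnt A₁) (haa : arcsCnt A₂ = arcsCnt A₁)
    (hcW₁ : Nat.card W₁ = 2)
    (e : (Fin n ⊕ Fin n) ≃ W₁ × W₂)
    (he : ∀ u v, DUnion A₁ A₂ u v ↔ DProd B₁ B₂ (e u) (e v)) :
    IsIso A₁ A₂ := by
  classical
  have : Fintype W₁ := Fintype.ofFinite W₁
  have hfc : Fintype.card W₁ = Fintype.card Bool := by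
    rw [← Nat.card_eq_fintype_card, hcW₁, Fintype.card_bool]
  let ε : W₁ ≃ Bool := Fintype.equivOfCardEq hfc
  let B₁' : Bool → Bool → Prop := fun x y => B₁ (ε.symm x) (ε.symm y)
  have hB₁' : Symmetric B₁' := fun x y hxy => hB₁ hxy
  let e' : (Fin n ⊕ Fin n) ≃ Bool × W₂ := e.trans (ε.prodCongr (Equiv.refl W₂))
  have he' : ∀ u v, DUnion A₁ A₂ u v ↔ DProd B₁' B₂ (e' u) (e' v) := by
    intro u v
    rw [he u v]
    simp only [DProd, e', B₁', Equiv.trans_apply, Equiv.prodCongr_apply, Prod.map,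
      Equiv.symm_apply_apply, Equiv.refl_apply]
  exact core hs₁ hs₂ hB₁' hn hconn₁ hconn₂ hbip h2 h3 haa e' he'


theorem stmt2 (n m s : ℕ)
    (A₁ A₂ : Fin n → Fin n → Prop) (hs₁ : Symmetric A₁) (hs₂ : Symmetric A₂)
    (hG₁ : InClassG hs₁) (hG₂ : InClassG hs₂)
    (hm₁ : numEdges hs₁ = m) (hm₂ : numEdges hs₂ = m)
    (hl₁ : numLoops A₁ = s) (hl₂ : numLoops A₂ = s) :
    Composite (DUnion A₁ A₂) ↔ IsIso A₁ A₂ := by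
  classical
  obtain ⟨hconn₁, hbip₁, hprime, hlt₁, h2₁, h3₁⟩ := hG₁
  obtain ⟨hconn₂, hbip₂, -, hlt₂, h2₂, h3₂⟩ := hG₂
  have hn : 2 ≤ n := hprime.two_le
  have hcnt₁ : arcsCnt A₁ + s = 2 * m := by
    have := arcsCnt_count hs₁; rw [hm₁, hl₁] at this; exact this
  have hcnt₂ : arcsCnt A₂ + s = 2 * m := by
    have := arcsCnt_count hs₂; rw [hm₂, hl₂] at this; exact this
  have haa : arcsCnt A₂ = arcsCnt A₁ := by omega
  have hsm : s ≤ 2 * m := by omega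
  have harc1 : arcsCnt A₁ = 2 * m - s := by omega
  rw [hm₁, hl₁] at h2₁ h3₁
  have h2 : ¬ 2 ∣ arcsCnt A₁ := by rw [harc1]; exact h2₁
  have h3 : ¬ 3 ∣ arcsCnt A₁ := by rw [harc1]; exact h3₁
  constructor
  · -- Composite → IsIso
    rintro ⟨W₁, W₂, B₁, B₂, hB₁, hB₂, hc₁, hc₂, e, he⟩
    have hfinprod : Finite (W₁ × W₂) := Finite.of_equiv _ e
    have hne₁ : Nonempty W₁ := by
      by_contra hemp
      have : IsEmpty W₁ := not_nonempty_iff.mp hemp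
      rw [Nat.card_of_isEmpty] at hc₁; omega
    have hne₂ : Nonempty W₂ := by
      by_contra hemp
      have : IsEmpty W₂ := not_nonempty_iff.mp hemp
      rw [Nat.card_of_isEmpty] at hc₂; omega
    have hfin₁ : Finite W₁ := Finite.prod_left W₂
    have hfin₂ : Finite W₂ := Finite.prod_right W₁
    have hcards : Nat.card W₁ * Nat.card W₂ = 2 * n := by
      have := Nat.card_congr e
      rw [Nat.card_sum, Nat.card_prod] at this
      simp only [Nat.card_eq_fintype_card, Fintype.card_fin] at this
      omega
    -- factorization
    have hfact : (Nat.card W₁ = 2 ∧ Nat.card W₂ = n) ∨ (Nat.card W₁ = n ∧ Nat.card W₂ = 2) :=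
      fact2 hcards hc₁ hc₂ hprime
    rcases hfact with ⟨hcw, -⟩ | ⟨-, hcw⟩
    · exact fromProd hs₁ hs₂ hB₁ hn hconn₁ hconn₂ hbip₁ h2 h3 haa hcw e he
    · refine fromProd (B₁ := B₂) (B₂ := B₁) hs₁ hs₂ hB₂ hn hconn₁ hconn₂ hbip₁ h2 h3 haa hcw
        (e.trans (Equiv.prodComm W₁ W₂)) ?_
      intro u v
      rw [he u v]
      simp only [DProd, Equiv.trans_apply, Equiv.prodComm_apply, Prod.fst_swap, Prod.snd_swap]
      exact ⟨fun h' => ⟨h'.2, h'.1⟩, fun h' => ⟨h'.2, h'.1⟩⟩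
  · -- IsIso → Composite
    rintro ⟨φ, hφ⟩
    refine ⟨Fin n, Bool, A₁, Eq, hs₁, fun a b h' => h'.symm, ?_, ?_, ?_⟩
    · simp only [Nat.card_eq_fintype_card, Fintype.card_fin]; exact hn
    · simp
    · refine ⟨{ toFun := Sum.elim (fun u => (u, false)) (fun u => (φ.symm u, true))
                invFun := fun p => if p.2 then Sum.inr (φ p.1) else Sum.inl p.1
                left_inv := ?_
                right_inv := ?_ }, ?_⟩
      · rintro (u | u) <;> simp
      · rintro ⟨u, b⟩
        cases b <;> simp
      · rintro (u | u) (v | v) <;>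
          simp [DUnion, DProd, Equiv.coe_fn_mk]
        · exact ⟨fun h' => (hφ _ _).mpr (by simpa using h'),
            fun h' => by simpa using (hφ _ _).mp h'⟩
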